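/- Let ρ, σ be positive semidefinite matrices such that the kernel of σ is contained in the kernel of ρ. Then the set {λ ∈ ℝ : λ ≥ 0 and ρ ≤ λ·σ} has a least element λ*, and λ* = sup { tr(Xρ) : X positive semidefinite with tr(Xσ) ≤ 1 }, with this supremum attained by some such X. -/

import Mathlib

open scoped Classical ComplexOrder Kronecker
open Matrix

noncomputable section

variable {n : Type*} [Fintype n] [DecidableEq n]

/-- Real part of the trace. -/
def rtr (A : Matrix n n ℂ) : ℝ := (A.trace).re

/-- Löwner order: `loewnerLE A B` iff `B - A` is positive semidefinite. -/
def loewnerLE (A B : Matrix n n ℂ) : Prop := (B - A).PosSemidef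

/-- Port: `Matrix.PosSemidef.sqrt` was removed from Mathlib; restored with its old definition. -/
def Matrix.PosSemidef.sqrt {𝕜 : Type*} [RCLike 𝕜] {A : Matrix n n 𝕜} (hA : A.PosSemidef) :
    Matrix n n 𝕜 :=
  hA.1.eigenvectorUnitary.1 * diagonal ((↑) ∘ (Real.sqrt ·) ∘ hA.1.eigenvalues) *
    (star hA.1.eigenvectorUnitary : Matrix n n 𝕜)

/-- Positive semidefinite square root of a PSD matrix (junk value `0` otherwise). -/
def msqrt (A : Matrix n n ℂ) : Matrix n n ℂ :=
  if h : A.PosSemidef then h.sqrt else 0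

/-- Trace norm `‖A‖₁ = tr √(Aᴴ A)`. -/
def traceNorm (A : Matrix n n ℂ) : ℝ :=
  rtr (Matrix.posSemidef_conjTranspose_mul_self A).sqrt

/-- Generalized fidelity for sub-normalized states. -/
def genFid (ρ σ : Matrix n n ℂ) : ℝ :=
  (traceNorm (msqrt ρ * msqrt σ) + Real.sqrt ((1 - rtr ρ) * (1 - rtr σ))) ^ 2

/-- Purified distance. -/
def purDist (ρ σ : Matrix n n ℂ) : ℝ := Real.sqrt (1 - genFid ρ σ)

/-- Trace distance. -/
def traceDist (ρ σ : Matrix n n ℂ) : ℝ := traceNorm (ρ - σ) / 2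

/-- Max-divergence `D_max(ρ‖σ) = inf {λ : ρ ≤ 2^λ σ}` (Löwner order). -/
def Dmax (ρ σ : Matrix n n ℂ) : ℝ :=
  sInf {lam : ℝ | loewnerLE ρ (((2 : ℝ) ^ lam) • σ)}

/-- Smoothed max-divergence with purified-distance smoothing over sub-normalized states. -/
def DmaxSmoothP (ε : ℝ) (ρ σ : Matrix n n ℂ) : ℝ :=
  sInf {d : ℝ | ∃ ρ' : Matrix n n ℂ,
    ρ'.PosSemidef ∧ rtr ρ' ≤ 1 ∧ purDist ρ ρ' ≤ ε ∧ d = Dmax ρ' σ}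

/-- Hypothesis testing divergence
`D_h^ε(ρ‖σ) = -log sup {tr (Λ σ) : 0 ≤ Λ ≤ 1, tr (Λ ρ) ≥ 1 - ε}`. -/
def Dh (ε : ℝ) (ρ σ : Matrix n n ℂ) : ℝ :=
  - Real.logb 2 (sSup {x : ℝ | ∃ L : Matrix n n ℂ,
      L.PosSemidef ∧ loewnerLE L 1 ∧ 1 - ε ≤ rtr (L * ρ) ∧ x = rtr (L * σ)})

/-- Real power of a Hermitian matrix, defined spectrally (junk value `0` if not Hermitian). -/
def hpow (A : Matrix n n ℂ) (t : ℝ) : Matrix n n ℂ :=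
  if h : A.IsHermitian then
    (h.eigenvectorUnitary : Matrix n n ℂ) *
      Matrix.diagonal (fun i => ((h.eigenvalues i ^ t : ℝ) : ℂ)) *
      (star (h.eigenvectorUnitary : Matrix n n ℂ))
  else 0

/-- Sandwiched Rényi divergence of order `α`. -/
def sandwichedRenyi (α : ℝ) (ρ σ : Matrix n n ℂ) : ℝ :=
  (1 / (α - 1)) * Real.logb 2
    (rtr (hpow (hpow σ ((1 - α) / (2 * α)) * ρ * hpow σ ((1 - α) / (2 * α))) α) / rtr ρ)

/-- Marginal (partial trace) on the first factor. -/
def margA {A B : Type*} [Fintype A] [Fintype B] (ρ : Matrix (A × B) (A × B) ℂ) :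
    Matrix A A ℂ :=
  Matrix.of fun a a' => ∑ b : B, ρ (a, b) (a', b)

/-- Marginal (partial trace) on the second factor. -/
def margB {A B : Type*} [Fintype A] [Fintype B] (ρ : Matrix (A × B) (A × B) ℂ) :
    Matrix B B ℂ :=
  Matrix.of fun b b' => ∑ a : A, ρ (a, b) (a, b')

end


section Helpers
set_option linter.unusedSectionVars false
set_option maxHeartbeats 1000000

variable {n : Type*} [Fintype n] [DecidableEq n]

noncomputable def quadRe (A : Matrix n n ℂ) (x : n → ℂ) : ℝ := (star x ⬝ᵥ A *ᵥ x).re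

lemma herm_dot_real {H : Matrix n n ℂ} (hH : H.IsHermitian) (x : n → ℂ) :
    (star x ⬝ᵥ H *ᵥ x) = ((quadRe H x : ℝ) : ℂ) := by
  have h1 : star (star x ⬝ᵥ H *ᵥ x) = star x ⬝ᵥ H *ᵥ x := by
    calc star (star x ⬝ᵥ H *ᵥ x) = star (H *ᵥ x) ⬝ᵥ x := by
          rw [star_dotProduct, star_star]
      _ = (star x ᵥ* Hᴴ) ⬝ᵥ x := by rw [star_mulVec]
      _ = star x ⬝ᵥ H *ᵥ x := by rw [hH.eq, dotProduct_mulVec]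
  have him : (star x ⬝ᵥ H *ᵥ x).im = 0 := by
    have := congrArg Complex.im h1
    simp only [Complex.star_def, Complex.conj_im] at this
    linarith
  apply Complex.ext <;> simp [quadRe, him]

lemma posSemidef_of_quadRe {H : Matrix n n ℂ} (hH : H.IsHermitian)
    (h : ∀ x, 0 ≤ quadRe H x) : H.PosSemidef := by
  refine Matrix.PosSemidef.of_dotProduct_mulVec_nonneg hH fun x => ?_
  rw [herm_dot_real hH]
  exact_mod_cast h x

lemma quadRe_nonneg {H : Matrix n n ℂ} (hH : H.PosSemidef) (x : n → ℂ) :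
    0 ≤ quadRe H x := hH.re_dotProduct_nonneg x

lemma quadRe_eq_zero_iff {H : Matrix n n ℂ} (hH : H.PosSemidef) (x : n → ℂ) :
    quadRe H x = 0 ↔ H *ᵥ x = 0 := by
  rw [← hH.dotProduct_mulVec_zero_iff, herm_dot_real hH.1]
  constructor
  · intro h; rw [h]; norm_num
  · intro h; exact_mod_cast congrArg Complex.re h

lemma real_smul_matrix (l : ℝ) (A : Matrix n n ℂ) : l • A = ((l : ℂ)) • A := by
  ext i j; simp [Complex.real_smul]

lemma quadRe_smul_sub (l : ℝ) (A B : Matrix n n ℂ) (x : n → ℂ) :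
    quadRe (l • A - B) x = l * quadRe A x - quadRe B x := by
  rw [real_smul_matrix]
  simp [quadRe, sub_mulVec, smul_mulVec, dotProduct_sub, dotProduct_smul]

lemma quadRe_add_of_kernel {H : Matrix n n ℂ} (hH : H.IsHermitian) {u v : n → ℂ}
    (hv : H *ᵥ v = 0) : quadRe H (u + v) = quadRe H u := by
  have h2 : star v ⬝ᵥ H *ᵥ u = 0 := by
    rw [dotProduct_mulVec, ← hH.eq, ← star_mulVec, hv]
    simp
  simp [quadRe, mulVec_add, hv, dotProduct_add, star_add, add_dotProduct, h2]

lemma quadRe_spectral {H : Matrix n n ℂ} (hH : H.IsHermitian) (x : n → ℂ) :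
    quadRe H x = ∑ i, hH.eigenvalues i *
      Complex.normSq ((star (hH.eigenvectorUnitary : Matrix n n ℂ) *ᵥ x) i) := by
  set U : Matrix n n ℂ := (hH.eigenvectorUnitary : Matrix n n ℂ)
  set y : n → ℂ := star U *ᵥ x with hy
  have key : star x ⬝ᵥ H *ᵥ x = star y ⬝ᵥ (Matrix.diagonal (Complex.ofReal ∘ hH.eigenvalues)) *ᵥ y := by
    conv_lhs => rw [hH.spectral_theorem, Unitary.conjStarAlgAut_apply]
    rw [← mulVec_mulVec, ← mulVec_mulVec, dotProduct_mulVec (star x)]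
    congr 1
    rw [hy, star_mulVec, star_eq_conjTranspose, conjTranspose_conjTranspose]
  rw [quadRe, key]
  rw [dotProduct]
  rw [Complex.re_sum]
  congr 1; funext i
  rw [mulVec_diagonal]
  simp [Complex.normSq_apply]
  ring

lemma sum_normSq_star_unitary_mulVec {U : Matrix n n ℂ} (hU : U ∈ Matrix.unitaryGroup n ℂ)
    (x : n → ℂ) :
    ∑ i, Complex.normSq ((star U *ᵥ x) i) = ∑ i, Complex.normSq (x i) := by
  have h1 : ∀ w : n → ℂ, (star w ⬝ᵥ w) = ((∑ i, Complex.normSq (w i) : ℝ) : ℂ) := by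
    intro w
    rw [dotProduct]
    push_cast
    congr 1; funext i
    simp [Complex.normSq_eq_conj_mul_self]
  have h2 : star (star U *ᵥ x) ⬝ᵥ (star U *ᵥ x) = star x ⬝ᵥ x := by
    rw [star_mulVec, star_eq_conjTranspose, conjTranspose_conjTranspose, dotProduct_mulVec,
      vecMul_vecMul, ← star_eq_conjTranspose]
    rw [Matrix.mem_unitaryGroup_iff.mp hU, vecMul_one]
  have := h2
  rw [h1, h1] at this
  exact_mod_cast this

lemma exists_quad_bound {A B : Matrix n n ℂ} (hA : A.PosSemidef) (hB : B.PosSemidef)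
    (hker : ∀ x, A *ᵥ x = 0 → B *ᵥ x = 0) :
    ∃ c : ℝ, 0 ≤ c ∧ ∀ x, quadRe B x ≤ c * quadRe A x := by
  classical
  set d := hA.1.eigenvalues with hd
  set U : Matrix n n ℂ := (hA.1.eigenvectorUnitary : Matrix n n ℂ) with hU
  have hUmem : U ∈ Matrix.unitaryGroup n ℂ := hA.1.eigenvectorUnitary.2
  by_cases hT : ∀ i, d i = 0
  · -- A = 0
    have hA0 : A = 0 := by
      have := hA.1.spectral_theorem
      have hT' : ∀ i, hA.1.eigenvalues i = 0 := hT
      have hdiag : Matrix.diagonal (RCLike.ofReal ∘ hA.1.eigenvalues) = (0 : Matrix n n ℂ) := by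
        ext i j
        by_cases h : i = j <;> simp [Matrix.diagonal, h, hT']
      rw [hdiag] at this
      simpa using this
    refine ⟨0, le_refl _, fun x => ?_⟩
    have : B *ᵥ x = 0 := hker x (by simp [hA0])
    simp [quadRe, this]
  · push_neg at hT
    set T : Finset n := Finset.univ.filter (fun i => d i ≠ 0) with hTdef
    have hTne : T.Nonempty := by
      obtain ⟨i, hi⟩ := hT
      exact ⟨i, by simp [hTdef, hi]⟩
    set δ : ℝ := T.inf' hTne d with hδ
    have hδpos : 0 < δ := by
      obtain ⟨i, hiT, hie⟩ := Finset.exists_mem_eq_inf' hTne d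
      have hine : d i ≠ 0 := by simpa [hTdef] using hiT
      have h0 := hA.eigenvalues_nonneg i
      rw [hδ, hie]
      exact lt_of_le_of_ne h0 (Ne.symm hine)
    set e := hB.1.eigenvalues with he
    set cB : ℝ := ∑ j, e j with hcB
    have hek : ∀ j, 0 ≤ e j := fun j => hB.eigenvalues_nonneg j
    have hcB0 : 0 ≤ cB := Finset.sum_nonneg fun j _ => hek j
    have hecB : ∀ j, e j ≤ cB :=
      fun j => Finset.single_le_sum (fun k _ => hek k) (Finset.mem_univ j)
    refine ⟨cB / δ, div_nonneg hcB0 hδpos.le, fun x => ?_⟩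
    set y : n → ℂ := star U *ᵥ x with hy
    set y₁ : n → ℂ := fun i => if d i = 0 then y i else 0 with hy₁
    set x₁ : n → ℂ := U *ᵥ y₁ with hx₁
    set x₀ : n → ℂ := x - x₁ with hx₀
    have hAx₁ : A *ᵥ x₁ = 0 := by
      rw [hx₁, mulVec_mulVec]
      conv_lhs => rw [hA.1.spectral_theorem, Unitary.conjStarAlgAut_apply]
      rw [mul_assoc, mul_assoc]
      rw [show star (hA.1.eigenvectorUnitary : Matrix n n ℂ) * U = 1 from
        Matrix.mem_unitaryGroup_iff'.mp hUmem]
      rw [mul_one, ← mulVec_mulVec]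
      have : Matrix.diagonal (RCLike.ofReal ∘ hA.1.eigenvalues) *ᵥ y₁ = 0 := by
        have hT2 : ∀ i, d i = hA.1.eigenvalues i := fun i => rfl
        funext i
        by_cases h : d i = 0
        · have h2 : hA.1.eigenvalues i = 0 := (hT2 i) ▸ h
          simp [mulVec_diagonal, h2]
        · simp [mulVec_diagonal, hy₁, h]
      rw [this]
      simp
    have hBx₁ : B *ᵥ x₁ = 0 := hker x₁ hAx₁
    have hxsum : x = x₀ + x₁ := by rw [hx₀]; ring
    have hqA : quadRe A x = quadRe A x₀ := by
      conv_lhs => rw [hxsum]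
      exact quadRe_add_of_kernel hA.1 hAx₁
    have hqB : quadRe B x = quadRe B x₀ := by
      conv_lhs => rw [hxsum]
      exact quadRe_add_of_kernel hB.1 hBx₁
    have hy₀ : star U *ᵥ x₀ = y - y₁ := by
      rw [hx₀, mulVec_sub, hx₁, mulVec_mulVec,
        show star U * U = 1 from Matrix.mem_unitaryGroup_iff'.mp hUmem, one_mulVec, hy]
    set s : ℝ := ∑ i, Complex.normSq ((y - y₁) i) with hs
    have hqA₀ : quadRe A x₀ = ∑ i, d i * Complex.normSq ((y - y₁) i) := by
      rw [quadRe_spectral hA.1 x₀, ← hU, hy₀]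
    have hlow : δ * s ≤ quadRe A x₀ := by
      rw [hqA₀, hs, Finset.mul_sum]
      apply Finset.sum_le_sum
      intro i _
      by_cases h : d i = 0
      · simp [hy₁, h]
      · have hiT : i ∈ T := by simp [hTdef, h]
        exact mul_le_mul_of_nonneg_right (Finset.inf'_le d hiT) (Complex.normSq_nonneg _)
    have hupp : quadRe B x₀ ≤ cB * s := by
      rw [quadRe_spectral hB.1 x₀]
      have h1 : ∑ i, e i * Complex.normSq
          ((star (hB.1.eigenvectorUnitary : Matrix n n ℂ) *ᵥ x₀) i)
          ≤ cB * ∑ i, Complex.normSq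
          ((star (hB.1.eigenvectorUnitary : Matrix n n ℂ) *ᵥ x₀) i) := by
        rw [Finset.mul_sum]
        exact Finset.sum_le_sum fun i _ =>
          mul_le_mul_of_nonneg_right (hecB i) (Complex.normSq_nonneg _)
      refine h1.trans ?_
      rw [sum_normSq_star_unitary_mulVec hB.1.eigenvectorUnitary.2 x₀]
      have h2 : ∑ i, Complex.normSq (x₀ i) = s := by
        rw [← sum_normSq_star_unitary_mulVec hUmem x₀, hy₀, hs]
      rw [h2]
    have hδs : 0 ≤ s := Finset.sum_nonneg fun i _ => Complex.normSq_nonneg _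
    calc quadRe B x = quadRe B x₀ := hqB
      _ ≤ cB * s := hupp
      _ = (cB / δ) * (δ * s) := by field_simp
      _ ≤ (cB / δ) * quadRe A x₀ :=
          mul_le_mul_of_nonneg_left hlow (div_nonneg hcB0 hδpos.le)
      _ = (cB / δ) * quadRe A x := by rw [hqA]

lemma rtr_nonneg' {A : Matrix n n ℂ} (hA : A.PosSemidef) : 0 ≤ (A.trace).re := by
  simp only [Matrix.trace, Matrix.diag_apply, Complex.re_sum]
  apply Finset.sum_nonneg
  intro i _
  have h := hA.dotProduct_mulVec_nonneg (Pi.single i 1)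
  have hd : star (Pi.single i 1 : n → ℂ) ⬝ᵥ A *ᵥ Pi.single i 1 = A i i := by
    simp only [dotProduct, mulVec_single, mul_one]
    rw [Finset.sum_eq_single i] <;> simp +contextual [Pi.single_apply]
  rw [hd] at h
  exact (Complex.le_def.mp h).1

lemma rtr_mul_nonneg' {X M : Matrix n n ℂ} (hX : X.PosSemidef) (hM : M.PosSemidef) :
    0 ≤ ((X * M).trace).re := by
  open scoped MatrixOrder in
  obtain ⟨B, rfl⟩ := CStarAlgebra.nonneg_iff_eq_star_mul_self.mp hM.nonneg
  rw [star_eq_conjTranspose]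
  have h1 : (X * (Bᴴ * B)).trace = (B * X * Bᴴ).trace := by
    rw [← mul_assoc, Matrix.trace_mul_cycle]
  rw [h1]
  exact rtr_nonneg' (hX.mul_mul_conjTranspose_same B)

noncomputable def outerP (v : n → ℂ) : Matrix n n ℂ := Matrix.of fun i j => v i * star (v j)

lemma outerP_posSemidef (v : n → ℂ) : (outerP v).PosSemidef := by
  refine Matrix.PosSemidef.of_dotProduct_mulVec_nonneg ?_ ?_
  · ext i j
    simp [outerP, Matrix.conjTranspose_apply, mul_comm]
  · intro x
    have : star x ⬝ᵥ (outerP v) *ᵥ x = star (star v ⬝ᵥ x) * (star v ⬝ᵥ x) := by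
      simp only [dotProduct, mulVec, outerP, Matrix.of_apply, star_sum, Pi.star_apply,
        Finset.mul_sum, Finset.sum_mul, star_mul']
      rw [Finset.sum_comm]
      apply Finset.sum_congr rfl
      intro j _
      apply Finset.sum_congr rfl
      intro i _
      simp
      ring
    rw [this]
    exact star_mul_self_nonneg _

lemma trace_outerP_mul (v : n → ℂ) (A : Matrix n n ℂ) :
    ((outerP v * A).trace) = star v ⬝ᵥ A *ᵥ v := by
  simp only [Matrix.trace, Matrix.diag, Matrix.mul_apply, outerP, Matrix.of_apply,
    dotProduct, mulVec]
  rw [Finset.sum_comm]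
  apply Finset.sum_congr rfl
  intro j _
  rw [Finset.mul_sum]
  apply Finset.sum_congr rfl
  intro i _
  simp only [Pi.star_apply]
  ring

lemma isHermitian_real_smul_sub {A B : Matrix n n ℂ} (hA : A.IsHermitian)
    (hB : B.IsHermitian) (l : ℝ) : (l • A - B).IsHermitian := by
  rw [real_smul_matrix]
  have : star (l : ℂ) = (l : ℂ) := Complex.conj_ofReal l
  simp [Matrix.IsHermitian, Matrix.conjTranspose_sub, Matrix.conjTranspose_smul,
    hA.eq, hB.eq, this]

lemma loewner_iff {ρ σ : Matrix n n ℂ} (hρ : ρ.IsHermitian) (hσ : σ.IsHermitian) (l : ℝ) :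
    loewnerLE ρ (l • σ) ↔ ∀ x, quadRe ρ x ≤ l * quadRe σ x := by
  have hherm : (l • σ - ρ).IsHermitian := isHermitian_real_smul_sub hσ hρ l
  constructor
  · intro h x
    have := h.re_dotProduct_nonneg x
    have h2 : quadRe (l • σ - ρ) x = l * quadRe σ x - quadRe ρ x := quadRe_smul_sub l σ ρ x
    have h3 : (0:ℝ) ≤ quadRe (l • σ - ρ) x := this
    linarith
  · intro h
    refine posSemidef_of_quadRe hherm fun x => ?_
    rw [quadRe_smul_sub l σ ρ x]
    linarith [h x]

lemma posSemidef_real_smul {M : Matrix n n ℂ} (hM : M.PosSemidef) {c : ℝ} (hc : 0 ≤ c) :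
    (c • M).PosSemidef := by
  have hherm : (c • M).IsHermitian := by
    have := isHermitian_real_smul_sub hM.1 (Matrix.isHermitian_zero) c
    simpa using this
  refine posSemidef_of_quadRe hherm fun x => ?_
  have : quadRe (c • M) x = c * quadRe M x := by
    have := quadRe_smul_sub c M 0 x
    simpa [quadRe] using this
  rw [this]
  exact mul_nonneg hc (quadRe_nonneg hM x)

end Helpers


/-- Minimax characterization of the (non-smoothed) max-divergence:
the least `λ ≥ 0` with `ρ ≤ λ σ` exists and equals the attained supremum of `tr (X ρ)`
over PSD `X` with `tr (X σ) ≤ 1`. -/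

theorem dmax_minimax
    {n : Type*} [Fintype n] [DecidableEq n] [Nonempty n]
    (ρ σ : Matrix n n ℂ) (hρ : ρ.PosSemidef) (hσ : σ.PosSemidef)
    (hker : ∀ x : n → ℂ, σ.mulVec x = 0 → ρ.mulVec x = 0) :
    ∃ lam : ℝ,
      IsLeast {l : ℝ | 0 ≤ l ∧ loewnerLE ρ (l • σ)} lam ∧
      IsGreatest {x : ℝ | ∃ X : Matrix n n ℂ,
        X.PosSemidef ∧ rtr (X * σ) ≤ 1 ∧ x = rtr (X * ρ)} lam := by
    classical
  set S : Set ℝ := {l : ℝ | 0 ≤ l ∧ loewnerLE ρ (l • σ)} with hS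
  -- S is nonempty
  obtain ⟨c₀, hc₀0, hc₀⟩ := exists_quad_bound hσ hρ hker
  have hne : S.Nonempty := ⟨c₀, hc₀0, (loewner_iff hρ.1 hσ.1 c₀).mpr hc₀⟩
  have hbdd : BddBelow S := ⟨0, fun l hl => hl.1⟩
  set lam : ℝ := sInf S with hlam
  have hlam0 : 0 ≤ lam := le_csInf hne fun l hl => hl.1
  -- lam ∈ S
  have hlammem : lam ∈ S := by
    refine ⟨hlam0, (loewner_iff hρ.1 hσ.1 lam).mpr fun x => ?_⟩
    rcases eq_or_lt_of_le (quadRe_nonneg hσ x) with hq0 | hqpos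
    · have hσx : σ *ᵥ x = 0 := (quadRe_eq_zero_iff hσ x).mp hq0.symm
      have hρx : ρ *ᵥ x = 0 := hker x hσx
      have : quadRe ρ x = 0 := (quadRe_eq_zero_iff hρ x).mpr hρx
      rw [this, ← hq0]
      simp
    · have hkey : quadRe ρ x / quadRe σ x ≤ lam := by
        refine le_csInf hne fun l hl => ?_
        have := (loewner_iff hρ.1 hσ.1 l).mp hl.2 x
        exact (div_le_iff₀ hqpos).mpr this
      exact (div_le_iff₀ hqpos).mp hkey
  refine ⟨lam, ⟨hlammem, fun l hl => csInf_le hbdd hl⟩, ?_, ?_⟩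
  · -- membership: sup is attained
    by_cases hv : ∃ v, 0 < quadRe σ v ∧ quadRe ρ v = lam * quadRe σ v
    · obtain ⟨v, hv1, hv2⟩ := hv
      refine ⟨(quadRe σ v)⁻¹ • outerP v,
        posSemidef_real_smul (outerP_posSemidef v) (inv_nonneg.mpr hv1.le), ?_, ?_⟩
      · have h1 : rtr (((quadRe σ v)⁻¹ • outerP v) * σ) = (quadRe σ v)⁻¹ * quadRe σ v := by
          rw [Matrix.smul_mul, rtr, Matrix.trace_smul, trace_outerP_mul]
          simp [quadRe, Complex.real_smul]
        rw [h1, inv_mul_cancel₀ (ne_of_gt hv1)]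
      · have h2 : rtr (((quadRe σ v)⁻¹ • outerP v) * ρ) = (quadRe σ v)⁻¹ * quadRe ρ v := by
          rw [Matrix.smul_mul, rtr, Matrix.trace_smul, trace_outerP_mul]
          simp [quadRe, Complex.real_smul]
        rw [h2, hv2]
        field_simp
    · push_neg at hv
      -- strictness
      have hstrict : ∀ v, 0 < quadRe σ v → quadRe ρ v < lam * quadRe σ v := by
        intro v h
        exact lt_of_le_of_ne ((loewner_iff hρ.1 hσ.1 lam).mp hlammem.2 v) (hv v h)
      set M : Matrix n n ℂ := lam • σ - ρ with hMdef
      have hM : M.PosSemidef := hlammem.2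
      have hkerM : ∀ v, M *ᵥ v = 0 → σ *ᵥ v = 0 := by
        intro v h0
        have hqM : quadRe M v = 0 := by simp [quadRe, h0]
        have hsub : quadRe M v = lam * quadRe σ v - quadRe ρ v := quadRe_smul_sub lam σ ρ v
        have heq : quadRe ρ v = lam * quadRe σ v := by linarith
        have hnpos : ¬ (0 < quadRe σ v) := fun h => hv v h heq
        have hq0 : quadRe σ v = 0 :=
          le_antisymm (not_lt.mp hnpos) (quadRe_nonneg hσ v)
        exact (quadRe_eq_zero_iff hσ v).mp hq0
      obtain ⟨c, hc0, hcb⟩ := exists_quad_bound hM hσ hkerM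
      have hρ0 : ∀ x, quadRe ρ x = 0 := by
        rcases eq_or_lt_of_le hc0 with hc | hc
        · intro x
          have := hcb x
          rw [← hc, zero_mul] at this
          have hq0 : quadRe σ x = 0 := le_antisymm this (quadRe_nonneg hσ x)
          have hσx : σ *ᵥ x = 0 := (quadRe_eq_zero_iff hσ x).mp hq0
          exact (quadRe_eq_zero_iff hρ x).mpr (hker x hσx)
        · have hkey : ∀ x, quadRe ρ x ≤ (lam - 1/c) * quadRe σ x := by
            intro x
            have h1 := hcb x
            have h2 : quadRe M x = lam * quadRe σ x - quadRe ρ x := quadRe_smul_sub lam σ ρ x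
            rw [h2] at h1
            have h5' : c * quadRe ρ x ≤ c * ((lam - 1/c) * quadRe σ x) := by
              have heq : c * ((lam - 1/c) * quadRe σ x)
                  = c * (lam * quadRe σ x) - quadRe σ x := by
                field_simp
              rw [heq]
              nlinarith [h1]
            exact le_of_mul_le_mul_left h5' hc
          by_cases hl : lam - 1/c < 0
          · intro x
            have h3 := quadRe_nonneg hσ x
            have h4 := quadRe_nonneg hρ x
            have h6 : (lam - 1/c) * quadRe σ x ≤ 0 :=
              mul_nonpos_of_nonpos_of_nonneg hl.le h3
            linarith [hkey x]
          · exfalso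
            push_neg at hl
            have hmem : (lam - 1/c) ∈ S := ⟨hl, (loewner_iff hρ.1 hσ.1 _).mpr hkey⟩
            have h7 : lam ≤ lam - 1/c := csInf_le hbdd hmem
            have h8 : (0:ℝ) < 1/c := by positivity
            linarith
      have h0S : (0:ℝ) ∈ S := by
        refine ⟨le_refl _, (loewner_iff hρ.1 hσ.1 0).mpr fun x => ?_⟩
        rw [hρ0 x, zero_mul]
      have hlamle : lam ≤ 0 := csInf_le hbdd h0S
      have hlameq : lam = 0 := le_antisymm hlamle hlam0
      exact ⟨0, Matrix.PosSemidef.zero, by simp [rtr], by simp [rtr, hlameq]⟩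
  · -- upper bound
    rintro x ⟨X, hX, hXσ, rfl⟩
    have hM : ((lam • σ - ρ) : Matrix n n ℂ).PosSemidef := hlammem.2
    have h0 : 0 ≤ ((X * (lam • σ - ρ)).trace).re := rtr_mul_nonneg' hX hM
    have hexp : ((X * (lam • σ - ρ)).trace).re
        = lam * rtr (X * σ) - rtr (X * ρ) := by
      rw [Matrix.mul_sub, real_smul_matrix, Matrix.mul_smul, Matrix.trace_sub,
        Matrix.trace_smul]
      simp [rtr, Complex.smul_re]
    rw [hexp] at h0
    have h1 : 0 ≤ rtr (X * σ) := rtr_mul_nonneg' hX hσ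
    nlinarith
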